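/- Let P be a normal program with the bounded-term-size property. Then: (1) any atom true in WFM(P) has a finite stratum and is computed by a finite number of applications of the operator True^P; (2) WFM(P) contains a finite number of true atoms; and (3) WFM(P) has only a finite number of strata containing true atoms, i.e., the condition T^P_I ≠ ∅ can hold at only finitely many iterations of the iterated fixed point. -/

import Mathlib

namespace DistSem

/-! ### First-order syntax

Terms over a type `F` of function symbols (constants are 0-ary applications),
atoms over a type `P` of predicate symbols.  A language with a finite number of
function and constant symbols is modelled by a `[Finite F]` hypothesis (and
finitely many predicates by `[Finite P]`). -/

inductive FOTerm (F : Type) : Type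
  | var : ℕ → FOTerm F
  | app : F → List (FOTerm F) → FOTerm F

namespace FOTerm

variable {F : Type}

/-- The size of a term. -/
noncomputable def size (t : FOTerm F) : ℕ := sizeOf t

/-- `HasVar t n` holds iff the variable `n` occurs in `t`. -/
inductive HasVar : FOTerm F → ℕ → Prop
  | var (n : ℕ) : HasVar (.var n) n
  | app {f : F} {args : List (FOTerm F)} {t : FOTerm F} {n : ℕ} :
      t ∈ args → HasVar t n → HasVar (.app f args) n

/-- A term is ground if it contains no variables. -/
inductive Ground : FOTerm F → Prop
  | app {f : F} {args : List (FOTerm F)} : (∀ t ∈ args, Ground t) → Ground (.app f args)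

/-- Applying a substitution (an assignment of terms to variables) to a term. -/
def subst (θ : ℕ → FOTerm F) : FOTerm F → FOTerm F
  | .var n => θ n
  | .app f args => .app f (args.attach.map fun t => subst θ t.1)
decreasing_by
  have := List.sizeOf_lt_of_mem t.2
  simp only [FOTerm.app.sizeOf_spec]
  omega

end FOTerm

/-- A logical atom: a predicate symbol applied to a list of terms. -/
structure FOAtom (F P : Type) : Type where
  pred : P
  args : List (FOTerm F)

namespace FOAtom

variable {F P : Type}

def subst (θ : ℕ → FOTerm F) (A : FOAtom F P) : FOAtom F P :=
  ⟨A.pred, A.args.map (FOTerm.subst θ)⟩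

def Ground (A : FOAtom F P) : Prop := ∀ t ∈ A.args, t.Ground

def HasVar (A : FOAtom F P) (n : ℕ) : Prop := ∃ t ∈ A.args, t.HasVar n

/-- `A` is a ground instance of the (possibly non-ground) atom `Q`. -/
def InstanceOf (Q A : FOAtom F P) : Prop := A.Ground ∧ (A = Q ∨ ∃ θ, A = Q.subst θ)

end FOAtom

/-- A literal: an atom or a negated atom. -/
inductive Lit (F P : Type) : Type
  | pos (A : FOAtom F P)
  | neg (A : FOAtom F P)

namespace Lit

variable {F P : Type}

def subst (θ : ℕ → FOTerm F) : Lit F P → Lit F P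
  | pos A => pos (A.subst θ)
  | neg A => neg (A.subst θ)

def Ground : Lit F P → Prop
  | pos A => A.Ground
  | neg A => A.Ground

/-- The atom of a literal. -/
def atom : Lit F P → FOAtom F P
  | pos A => A
  | neg A => A

def HasVar (l : Lit F P) (n : ℕ) : Prop := l.atom.HasVar n

end Lit

/-- A normal clause `head ← body`. -/
structure Clause (F P : Type) : Type where
  head : FOAtom F P
  body : List (Lit F P)

namespace Clause

variable {F P : Type}

def subst (θ : ℕ → FOTerm F) (C : Clause F P) : Clause F P :=
  ⟨C.head.subst θ, C.body.map (Lit.subst θ)⟩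

def Ground (C : Clause F P) : Prop := C.head.Ground ∧ ∀ L ∈ C.body, L.Ground

def HasVar (C : Clause F P) (n : ℕ) : Prop :=
  C.head.HasVar n ∨ ∃ L ∈ C.body, L.HasVar n

/-- `Cg` is a ground instance of the clause `C`. -/
def Instance (C Cg : Clause F P) : Prop :=
  Cg.Ground ∧ (Cg = C ∨ ∃ θ, Cg = C.subst θ)

end Clause

/-- A normal logic program, viewed as a set of clauses.  (Finiteness of the set of
clauses of a user program is imposed by explicit hypotheses; ground instantiations
and worlds of LPADs are again of this type, but may be infinite.) -/
abbrev NormalProgram (F P : Type) := Set (Clause F P)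

variable {F P : Type}

/-- The ground instantiation `ground(P)` of a program. -/
def instancesOf (Pr : NormalProgram F P) : Set (Clause F P) :=
  {Cg | ∃ C ∈ Pr, C.Instance Cg}

/-! ### Three-valued interpretations and the iterated fixed point characterization
of the well-founded semantics (Przymusinski 1989). -/

/-- A 3-valued interpretation `⟨Tr; Fa⟩`. -/
structure Interp (F P : Type) : Type where
  tr : Set (FOAtom F P)
  fa : Set (FOAtom F P)

/-- A literal is true in `I`, or is a (positive) member of `Tr`. -/
def litTrueIn (I : Interp F P) (Tr : Set (FOAtom F P)) : Lit F P → Prop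
  | .pos A => A ∈ I.tr ∨ A ∈ Tr
  | .neg A => A ∈ I.fa

/-- A literal is true in the 3-valued interpretation `I`. -/
def litTrue (I : Interp F P) : Lit F P → Prop
  | .pos A => A ∈ I.tr
  | .neg A => A ∈ I.fa

/-- A literal is false in `I`, or is a (positive) member of `Fa`. -/
def litFalseIn (I : Interp F P) (Fa : Set (FOAtom F P)) : Lit F P → Prop
  | .pos A => A ∈ I.fa ∨ A ∈ Fa
  | .neg A => A ∈ I.tr

/-- The operator `True^P_I(Tr)`: the set of (ground) atoms `A` not true in `I` for
which there are a clause of `P` and a ground substitution `θ` yielding a ground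
instance with head `A` all of whose body literals are true in `I` or belong to
`Tr`. -/
def TrueOp (Pr : NormalProgram F P) (I : Interp F P) (Tr : Set (FOAtom F P)) :
    Set (FOAtom F P) :=
  {A | A ∉ I.tr ∧ ∃ Cg ∈ instancesOf Pr, Cg.head = A ∧ ∀ L ∈ Cg.body, litTrueIn I Tr L}

/-- The operator `False^P_I(Fa)`: the set of ground atoms `A` not false in `I` such
that every ground instance of a clause of `P` with head `A` has a body literal
false in `I` or belonging to `Fa`. -/
def FalseOp (Pr : NormalProgram F P) (I : Interp F P) (Fa : Set (FOAtom F P)) :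
    Set (FOAtom F P) :=
  {A | A ∉ I.fa ∧ A.Ground ∧
    ∀ Cg ∈ instancesOf Pr, Cg.head = A → ∃ L ∈ Cg.body, litFalseIn I Fa L}

/-- `T^P_I`: the least fixed point of `True^P_I` (starting from `∅`), presented via
Knaster–Tarski as the intersection of the prefixed points. -/
def Tset (Pr : NormalProgram F P) (I : Interp F P) : Set (FOAtom F P) :=
  ⋂₀ {S | TrueOp Pr I S ⊆ S}

/-- `F^P_I`: the greatest fixed point of `False^P_I` (starting from the Herbrand
base), presented via Knaster–Tarski as the union of the postfixed points. -/
def Fset (Pr : NormalProgram F P) (I : Interp F P) : Set (FOAtom F P) :=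
  ⋃₀ {S | S ⊆ FalseOp Pr I S}

/-- The finite iterates of `True^P_I` starting from `∅`. -/
def TrueIter (Pr : NormalProgram F P) (I : Interp F P) : ℕ → Set (FOAtom F P)
  | 0 => ∅
  | n + 1 => TrueOp Pr I (TrueIter Pr I n)

/-- The iterated fixed point: `WFM_0 = ⟨∅;∅⟩`,
`WFM_{α+1} = WFM_α ∪ ⟨T_{WFM_α}; F_{WFM_α}⟩`, with unions at limit ordinals. -/
noncomputable def WFMStage (Pr : NormalProgram F P) : Ordinal.{0} → Interp F P
  | o =>
    ⟨{A | ∃ o' : Ordinal.{0}, ∃ _ : o' < o,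
        A ∈ (WFMStage Pr o').tr ∪ Tset Pr (WFMStage Pr o')},
     {A | ∃ o' : Ordinal.{0}, ∃ _ : o' < o,
        A ∈ (WFMStage Pr o').fa ∪ Fset Pr (WFMStage Pr o')}⟩
  termination_by o => o

/-- The well-founded model `WFM(P)`, i.e. the limit of the iterated fixed point. -/
noncomputable def WFM (Pr : NormalProgram F P) : Interp F P :=
  ⟨{A | ∃ o : Ordinal.{0}, A ∈ (WFMStage Pr o).tr},
   {A | ∃ o : Ordinal.{0}, A ∈ (WFMStage Pr o).fa}⟩

end DistSem

namespace DistSem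

variable {F P : Type}

/-! ### The bounded-term-size property (Definition 4 of the paper),
stated via the sizes of the grounding substitutions used by `True^P_I`. -/

/-- `Cg` is a ground clause instance used to produce an atom in `TrueOp Pr I Tr`:
it is a ground instance of a clause of `Pr`, its head is not already true in `I`,
and all of its body literals are true in `I` or belong to `Tr`. -/
def UsedInstance (Pr : NormalProgram F P) (I : Interp F P) (Tr : Set (FOAtom F P))
    (Cg : Clause F P) : Prop :=
  Cg ∈ instancesOf Pr ∧ Cg.Ground ∧ Cg.head ∉ I.tr ∧ ∀ L ∈ Cg.body, litTrueIn I Tr L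

/-- The application `True^P_I(Tr)` has the bounded-term-size property with bound
`L`: the size of every ground substitution `θ` used to produce an atom in
`True^P_I(Tr)` is less than `L` (i.e. `θ` maps every variable of the clause being
instantiated to a term of size `< L`). -/
def BoundedApp (Pr : NormalProgram F P) (I : Interp F P) (Tr : Set (FOAtom F P))
    (L : ℕ) : Prop :=
  ∀ C ∈ Pr, ∀ θ : ℕ → FOTerm F,
    UsedInstance Pr I Tr (C.subst θ) → ∀ n, C.HasVar n → (θ n).size < L

/-- `P` has the bounded-term-size property: every application of `True^P_I` used to
construct `WFM(P)` has the bounded-term-size property with the same bound `L`.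
(The applications used are those with `I = WFM_α` for some stage `α` and with `Tr`
one of the sets arising in the iteration of the least fixed point of `True^P_I`;
all such sets are subsets of `T^P_I`, and by monotonicity of `True^P_I` it is
equivalent to quantify over all of them.) -/
def BTS (Pr : NormalProgram F P) : Prop :=
  ∃ L : ℕ, ∀ (o : Ordinal.{0}) (Tr : Set (FOAtom F P)),
    Tr ⊆ Tset Pr (WFMStage Pr o) → BoundedApp Pr (WFMStage Pr o) Tr L

end DistSem

namespace DistSem
set_option linter.dupNamespace false
variable {F P : Type}

/-! #### Auxiliary lemmas -/

theorem Interp.ext' {I J : Interp F P} (h1 : I.tr = J.tr) (h2 : I.fa = J.fa) : I = J := by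
  cases I; cases J; cases h1; cases h2; rfl

theorem litTrueIn_mono {I : Interp F P} {Tr Tr' : Set (FOAtom F P)} (h : Tr ⊆ Tr')
    {L : Lit F P} (hL : litTrueIn I Tr L) : litTrueIn I Tr' L := by
  cases L with
  | pos B => exact hL.imp id (fun hB => h hB)
  | neg B => exact hL

theorem litFalseIn_mono {I : Interp F P} {Fa Fa' : Set (FOAtom F P)} (h : Fa ⊆ Fa')
    {L : Lit F P} (hL : litFalseIn I Fa L) : litFalseIn I Fa' L := by
  cases L with
  | pos B => exact hL.imp id (fun hB => h hB)
  | neg B => exact hL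

theorem trueOp_mono (Pr : NormalProgram F P) (I : Interp F P) {Tr Tr' : Set (FOAtom F P)}
    (h : Tr ⊆ Tr') : TrueOp Pr I Tr ⊆ TrueOp Pr I Tr' := by
  rintro A ⟨hA, Cg, hCg, hhead, hbody⟩
  exact ⟨hA, Cg, hCg, hhead, fun L hL => litTrueIn_mono h (hbody L hL)⟩

theorem falseOp_mono (Pr : NormalProgram F P) (I : Interp F P) {Fa Fa' : Set (FOAtom F P)}
    (h : Fa ⊆ Fa') : FalseOp Pr I Fa ⊆ FalseOp Pr I Fa' := by
  rintro A ⟨hA, hg, hcl⟩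
  refine ⟨hA, hg, fun Cg hCg hh => ?_⟩
  obtain ⟨L, hL, hLf⟩ := hcl Cg hCg hh
  exact ⟨L, hL, litFalseIn_mono h hLf⟩

theorem tset_le {Pr : NormalProgram F P} {I : Interp F P} {S : Set (FOAtom F P)}
    (h : TrueOp Pr I S ⊆ S) : Tset Pr I ⊆ S :=
  Set.sInter_subset_of_mem h

theorem trueOp_tset_subset (Pr : NormalProgram F P) (I : Interp F P) :
    TrueOp Pr I (Tset Pr I) ⊆ Tset Pr I := by
  intro A hA
  rw [Tset, Set.mem_sInter]
  intro S hS
  exact hS (trueOp_mono Pr I (tset_le hS) hA)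

theorem tset_subset_trueOp (Pr : NormalProgram F P) (I : Interp F P) :
    Tset Pr I ⊆ TrueOp Pr I (Tset Pr I) :=
  tset_le (trueOp_mono Pr I (trueOp_tset_subset Pr I))

theorem tset_not_mem_tr {Pr : NormalProgram F P} {I : Interp F P} {A : FOAtom F P}
    (h : A ∈ Tset Pr I) : A ∉ I.tr :=
  (tset_subset_trueOp Pr I h).1

theorem le_fset {Pr : NormalProgram F P} {I : Interp F P} {S : Set (FOAtom F P)}
    (h : S ⊆ FalseOp Pr I S) : S ⊆ Fset Pr I :=
  Set.subset_sUnion_of_mem h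

theorem fset_subset_falseOp (Pr : NormalProgram F P) (I : Interp F P) :
    Fset Pr I ⊆ FalseOp Pr I (Fset Pr I) := by
  rintro A hA
  obtain ⟨S, hS, hAS⟩ := hA
  exact falseOp_mono Pr I (le_fset hS) (hS hAS)

/-- If the true part of the interpretation does not change, applying the greatest
fixed point operator a second time yields nothing new. -/
theorem fset_step_empty (Pr : NormalProgram F P) (I : Interp F P) :
    Fset Pr ⟨I.tr, I.fa ∪ Fset Pr I⟩ = ∅ := by
  set I' : Interp F P := ⟨I.tr, I.fa ∪ Fset Pr I⟩ with hI'
  set G := Fset Pr I' with hG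
  have hpost : Fset Pr I ∪ G ⊆ FalseOp Pr I (Fset Pr I ∪ G) := by
    rintro A (hA | hA)
    · obtain ⟨h1, h2, h3⟩ := fset_subset_falseOp Pr I hA
      refine ⟨h1, h2, fun Cg hCg hh => ?_⟩
      obtain ⟨L, hL, hLf⟩ := h3 Cg hCg hh
      exact ⟨L, hL, litFalseIn_mono Set.subset_union_left hLf⟩
    · obtain ⟨h1, h2, h3⟩ := fset_subset_falseOp Pr I' hA
      refine ⟨fun hmem => h1 (Or.inl hmem), h2, fun Cg hCg hh => ?_⟩
      obtain ⟨L, hL, hLf⟩ := h3 Cg hCg hh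
      refine ⟨L, hL, ?_⟩
      cases L with
      | pos B =>
        rcases hLf with (hB | hB) | hB
        · exact Or.inl hB
        · exact Or.inr (Or.inl hB)
        · exact Or.inr (Or.inr hB)
      | neg B => exact hLf
  have hsub : G ⊆ Fset Pr I := Set.union_subset_iff.1 (le_fset hpost) |>.2
  ext A
  simp only [Set.mem_empty_iff_false, iff_false]
  intro hA
  exact (fset_subset_falseOp Pr I' hA).1 (Or.inr (hsub hA))

/-! #### Finite iterates of the `TrueOp` operator -/

theorem trueIter_succ_subset (Pr : NormalProgram F P) (I : Interp F P) :
    ∀ m : ℕ, TrueIter Pr I m ⊆ TrueIter Pr I (m+1) := by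
  intro m
  induction m with
  | zero => intro A hA; cases hA
  | succ m ihm => exact trueOp_mono Pr I ihm

theorem trueIter_mono (Pr : NormalProgram F P) (I : Interp F P) {k k' : ℕ} (h : k ≤ k') :
    TrueIter Pr I k ⊆ TrueIter Pr I k' := by
  induction h with
  | refl => exact subset_rfl
  | @step k'' _ ih => exact ih.trans (trueIter_succ_subset Pr I k'')

theorem exists_uniform_iter (Pr : NormalProgram F P) (I : Interp F P) :
    ∀ l : List (Lit F P), (∀ L ∈ l, litTrueIn I (⋃ k, TrueIter Pr I k) L) →
      ∃ K : ℕ, ∀ L ∈ l, litTrueIn I (TrueIter Pr I K) L := by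
  intro l
  induction l with
  | nil => exact fun _ => ⟨0, by simp⟩
  | cons L l ih =>
    intro h
    obtain ⟨K1, hK1⟩ := ih (fun L' hL' => h L' (List.mem_cons_of_mem _ hL'))
    have hL := h L (List.mem_cons_self)
    have : ∃ K2, litTrueIn I (TrueIter Pr I K2) L := by
      cases L with
      | pos B =>
        rcases hL with hB | hB
        · exact ⟨0, Or.inl hB⟩
        · obtain ⟨k, hk⟩ := Set.mem_iUnion.1 hB
          exact ⟨k, Or.inr hk⟩
      | neg B => exact ⟨0, hL⟩
    obtain ⟨K2, hK2⟩ := this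
    refine ⟨max K1 K2, fun L' hL' => ?_⟩
    rcases List.mem_cons.1 hL' with rfl | hL'
    · exact litTrueIn_mono (trueIter_mono Pr I (le_max_right _ _)) hK2
    · exact litTrueIn_mono (trueIter_mono Pr I (le_max_left _ _)) (hK1 L' hL')

theorem tset_subset_iUnion_trueIter (Pr : NormalProgram F P) (I : Interp F P) :
    Tset Pr I ⊆ ⋃ k, TrueIter Pr I k := by
  apply tset_le
  rintro A ⟨hA, Cg, hCg, hhead, hbody⟩
  obtain ⟨K, hK⟩ := exists_uniform_iter Pr I Cg.body hbody
  exact Set.mem_iUnion.2 ⟨K+1, ⟨hA, Cg, hCg, hhead, hK⟩⟩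


/-! #### Stage lemmas -/

theorem mem_tr_iff {Pr : NormalProgram F P} {o : Ordinal.{0}} {A : FOAtom F P} :
    A ∈ (WFMStage Pr o).tr ↔ ∃ o' : Ordinal.{0}, ∃ _ : o' < o,
      A ∈ (WFMStage Pr o').tr ∪ Tset Pr (WFMStage Pr o') := by
  conv_lhs => rw [WFMStage]
  exact Iff.rfl

theorem mem_fa_iff {Pr : NormalProgram F P} {o : Ordinal.{0}} {A : FOAtom F P} :
    A ∈ (WFMStage Pr o).fa ↔ ∃ o' : Ordinal.{0}, ∃ _ : o' < o,
      A ∈ (WFMStage Pr o').fa ∪ Fset Pr (WFMStage Pr o') := by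
  conv_lhs => rw [WFMStage]
  exact Iff.rfl

theorem tr_mono (Pr : NormalProgram F P) {o1 o2 : Ordinal.{0}} (h : o1 ≤ o2) :
    (WFMStage Pr o1).tr ⊆ (WFMStage Pr o2).tr := by
  intro A hA
  rw [mem_tr_iff] at hA ⊢
  obtain ⟨o', ho', hA⟩ := hA
  exact ⟨o', ho'.trans_le h, hA⟩

theorem fa_mono (Pr : NormalProgram F P) {o1 o2 : Ordinal.{0}} (h : o1 ≤ o2) :
    (WFMStage Pr o1).fa ⊆ (WFMStage Pr o2).fa := by
  intro A hA
  rw [mem_fa_iff] at hA ⊢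
  obtain ⟨o', ho', hA⟩ := hA
  exact ⟨o', ho'.trans_le h, hA⟩

theorem tset_subset_tr {Pr : NormalProgram F P} {o' o : Ordinal.{0}} (h : o' < o) :
    Tset Pr (WFMStage Pr o') ⊆ (WFMStage Pr o).tr := by
  intro A hA
  rw [mem_tr_iff]
  exact ⟨o', h, Or.inr hA⟩

theorem fset_subset_fa {Pr : NormalProgram F P} {o' o : Ordinal.{0}} (h : o' < o) :
    Fset Pr (WFMStage Pr o') ⊆ (WFMStage Pr o).fa := by
  intro A hA
  rw [mem_fa_iff]
  exact ⟨o', h, Or.inr hA⟩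

theorem lt_add_one_ord (o : Ordinal.{0}) : o < o + 1 := by
  rw [Ordinal.add_one_eq_succ]
  exact Order.lt_succ o

theorem tr_succ (Pr : NormalProgram F P) (o : Ordinal.{0}) :
    (WFMStage Pr (o+1)).tr = (WFMStage Pr o).tr ∪ Tset Pr (WFMStage Pr o) := by
  apply Set.Subset.antisymm
  · intro A hA
    rw [mem_tr_iff] at hA
    obtain ⟨o', ho', hA⟩ := hA
    have ho'' : o' ≤ o := by
      rwa [Ordinal.add_one_eq_succ, Order.lt_succ_iff] at ho'
    rcases ho''.lt_or_eq with h' | rfl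
    · rcases hA with hA | hA
      · exact Or.inl (tr_mono Pr h'.le hA)
      · exact Or.inl (tset_subset_tr h' hA)
    · exact hA
  · intro A hA
    rw [mem_tr_iff]
    exact ⟨o, lt_add_one_ord o, hA⟩

theorem fa_succ (Pr : NormalProgram F P) (o : Ordinal.{0}) :
    (WFMStage Pr (o+1)).fa = (WFMStage Pr o).fa ∪ Fset Pr (WFMStage Pr o) := by
  apply Set.Subset.antisymm
  · intro A hA
    rw [mem_fa_iff] at hA
    obtain ⟨o', ho', hA⟩ := hA
    have ho'' : o' ≤ o := by
      rwa [Ordinal.add_one_eq_succ, Order.lt_succ_iff] at ho'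
    rcases ho''.lt_or_eq with h' | rfl
    · rcases hA with hA | hA
      · exact Or.inl (fa_mono Pr h'.le hA)
      · exact Or.inl (fset_subset_fa h' hA)
    · exact hA
  · intro A hA
    rw [mem_fa_iff]
    exact ⟨o, lt_add_one_ord o, hA⟩

theorem stage_succ (Pr : NormalProgram F P) (o : Ordinal.{0}) :
    WFMStage Pr (o+1) = ⟨(WFMStage Pr o).tr ∪ Tset Pr (WFMStage Pr o),
      (WFMStage Pr o).fa ∪ Fset Pr (WFMStage Pr o)⟩ :=
  Interp.ext' (tr_succ Pr o) (fa_succ Pr o)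

/-- Once a stage is a fixed point, all later stages coincide with it. -/
theorem stage_stable (Pr : NormalProgram F P) (oS : Ordinal.{0})
    (hT : Tset Pr (WFMStage Pr oS) = ∅) (hF : Fset Pr (WFMStage Pr oS) = ∅) :
    ∀ o : Ordinal.{0}, oS ≤ o → WFMStage Pr o = WFMStage Pr oS := by
  intro o
  induction o using Ordinal.induction with
  | h o ih =>
    intro ho
    rcases ho.lt_or_eq with hlt | rfl
    swap
    · rfl
    have htr : (WFMStage Pr o).tr = (WFMStage Pr oS).tr := by
      apply Set.Subset.antisymm
      · intro A hA
        rw [mem_tr_iff] at hA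
        obtain ⟨o', ho', hA⟩ := hA
        rcases le_or_gt oS o' with h' | h'
        · rw [ih o' ho' h'] at hA
          rcases hA with hA | hA
          · exact hA
          · rw [hT] at hA; cases hA
        · rcases hA with hA | hA
          · exact tr_mono Pr h'.le hA
          · exact tset_subset_tr h' hA
      · exact tr_mono Pr hlt.le
    have hfa : (WFMStage Pr o).fa = (WFMStage Pr oS).fa := by
      apply Set.Subset.antisymm
      · intro A hA
        rw [mem_fa_iff] at hA
        obtain ⟨o', ho', hA⟩ := hA
        rcases le_or_gt oS o' with h' | h'
        · rw [ih o' ho' h'] at hA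
          rcases hA with hA | hA
          · exact hA
          · rw [hF] at hA; cases hA
        · rcases hA with hA | hA
          · exact fa_mono Pr h'.le hA
          · exact fset_subset_fa h' hA
      · exact fa_mono Pr hlt.le
    exact Interp.ext' htr hfa



/-! #### Sizes and finiteness -/

theorem FOTerm.subst_app (θ : ℕ → FOTerm F) (f : F) (args : List (FOTerm F)) :
    FOTerm.subst θ (.app f args) = .app f (args.map (FOTerm.subst θ)) := by
  rw [FOTerm.subst]
  simp

theorem sizeOf_list_map_le {α β : Type _} [SizeOf α] [SizeOf β] (f : α → β) {B : ℕ}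
    (hB : 1 ≤ B) : ∀ l : List α, (∀ a ∈ l, sizeOf (f a) ≤ sizeOf a * B) →
      sizeOf (l.map f) ≤ sizeOf l * B := by
  intro l
  induction l with
  | nil => intro _; simp only [List.map_nil, List.nil.sizeOf_spec]; omega
  | cons a l ih =>
    intro h
    have h1 := h a (List.mem_cons_self)
    have h2 := ih (fun a ha => h a (List.mem_cons_of_mem _ ha))
    simp only [List.map_cons, List.cons.sizeOf_spec]
    nlinarith

theorem sizeOf_subst_le {B : ℕ} (hB : 1 ≤ B) (θ : ℕ → FOTerm F) :
    ∀ t : FOTerm F, (∀ n, t.HasVar n → sizeOf (θ n) ≤ B) →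
      sizeOf (t.subst θ) ≤ sizeOf t * B
  | .var n, h => by
    have := h n (.var n)
    simp only [FOTerm.subst, FOTerm.var.sizeOf_spec]
    nlinarith
  | .app f args, h => by
    rw [FOTerm.subst_app]
    have hlist := sizeOf_list_map_le (FOTerm.subst θ) hB args (fun t ht =>
      sizeOf_subst_le hB θ t (fun n hv => h n (.app ht hv)))
    simp only [FOTerm.app.sizeOf_spec]
    nlinarith
termination_by t => sizeOf t
decreasing_by
  have := List.sizeOf_lt_of_mem ht
  simp only [FOTerm.app.sizeOf_spec]
  omega

theorem one_le_sizeOf_term : ∀ t : FOTerm F, 1 ≤ sizeOf t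
  | .var n => by simp [FOTerm.var.sizeOf_spec]
  | .app f args => by simp only [FOTerm.app.sizeOf_spec]; omega

theorem length_lt_sizeOf_term_list : ∀ l : List (FOTerm F), l.length < sizeOf l
  | [] => by simp
  | a :: l => by
    have h1 := one_le_sizeOf_term a
    have h2 := length_lt_sizeOf_term_list l
    simp only [List.cons.sizeOf_spec, List.length_cons]
    omega

theorem finite_bounded_lists {α : Type} {s : Set α} (hs : s.Finite) :
    ∀ K : ℕ, {l : List α | l.length ≤ K ∧ ∀ x ∈ l, x ∈ s}.Finite
  | 0 => by
    apply (Set.finite_singleton ([] : List α)).subset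
    rintro l ⟨hl, -⟩
    simp only [Nat.le_zero, List.length_eq_zero_iff] at hl
    simp [hl]
  | K+1 => by
    have hK := finite_bounded_lists hs K
    apply (((hs.prod hK).image (fun p : α × List α => p.1 :: p.2)).insert []).subset
    rintro l ⟨hlen, hmem⟩
    cases l with
    | nil => exact Set.mem_insert _ _
    | cons a l =>
      refine Set.mem_insert_of_mem _ ⟨(a, l), ⟨hmem a (List.mem_cons_self), ?_, ?_⟩, rfl⟩
      · simpa using Nat.lt_succ_iff.1 (Nat.lt_of_lt_of_le (Nat.lt_succ_of_le le_rfl) (by simpa using hlen))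
      · exact fun x hx => hmem x (List.mem_cons_of_mem _ hx)

theorem finite_terms_le [Finite F] (M : ℕ) : {t : FOTerm F | sizeOf t ≤ M}.Finite := by
  induction M using Nat.strong_induction_on with
  | _ M ih =>
    rcases Nat.eq_zero_or_pos M with rfl | hM
    · apply Set.finite_empty.subset
      intro t ht
      have := one_le_sizeOf_term t
      simp only [Set.mem_setOf_eq] at ht
      omega
    · have hprev : {t : FOTerm F | sizeOf t ≤ M - 1}.Finite := ih (M-1) (by omega)
      have hlists := finite_bounded_lists hprev M
      apply (((Set.finite_Iic M).image FOTerm.var).union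
        ((Set.finite_univ.prod hlists).image (fun p : F × List (FOTerm F) => FOTerm.app p.1 p.2))).subset
      intro t ht
      simp only [Set.mem_setOf_eq] at ht
      cases t with
      | var n =>
        left
        refine ⟨n, ?_, rfl⟩
        simp only [FOTerm.var.sizeOf_spec, sizeOf_nat] at ht
        simp only [Set.mem_Iic]
        omega
      | app f args =>
        right
        simp only [FOTerm.app.sizeOf_spec] at ht
        have hargs : sizeOf args ≤ M - 1 := by omega
        have hlen := length_lt_sizeOf_term_list args
        refine ⟨(f, args), ⟨Set.mem_univ _, ?_, ?_⟩, rfl⟩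
        · show args.length ≤ M
          omega
        · show ∀ x ∈ args, x ∈ {t : FOTerm F | sizeOf t ≤ M - 1}
          intro x hx
          have := List.sizeOf_lt_of_mem hx
          simp only [Set.mem_setOf_eq]
          omega

theorem finite_atoms_le [Finite F] [Finite P] (K M : ℕ) :
    {A : FOAtom F P | A.args.length ≤ K ∧ ∀ t ∈ A.args, sizeOf t ≤ M}.Finite := by
  have h := finite_bounded_lists (finite_terms_le (F := F) M) K
  apply ((Set.finite_univ.prod h).image (fun p : P × List (FOTerm F) => FOAtom.mk p.1 p.2)).subset
  rintro ⟨p, args⟩ ⟨h1, h2⟩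
  exact ⟨(p, args), ⟨Set.mem_univ _, h1, h2⟩, rfl⟩


end DistSem

namespace DistSem

/-- Lemma 1 of the paper.  Let `P` be a normal program (a finite
set of clauses over a language with finitely many function and constant symbols)
with the bounded-term-size property.  Then:
(1) any atom true in `WFM(P)` has a finite stratum (it already appears at a stage
    indexed by a natural number) and is computed by a finite number of
    applications of the operator `True^P` (it appears in a finite iterate of
    `True^P_I` from `∅` at some stage `I`);
(2) `WFM(P)` contains a finite number of true atoms; and
(3) `WFM(P)` has only a finite number of strata containing true atoms: the
    condition `T^P_I ≠ ∅` holds at only finitely many iterations of the iterated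
    fixed point. -/
theorem bts_finite_strata_and_finitely_many_true_atoms
    {F P : Type} [Finite F] [Finite P]
    (Pr : NormalProgram F P) (hfin : Pr.Finite) (hbts : BTS Pr) :
    (∀ A ∈ (WFM Pr).tr,
        (∃ n : ℕ, A ∈ (WFMStage Pr (n : Ordinal.{0})).tr) ∧
        (∃ (n : ℕ) (k : ℕ), A ∈ TrueIter Pr (WFMStage Pr (n : Ordinal.{0})) k)) ∧
    (WFM Pr).tr.Finite ∧
    {o : Ordinal.{0} | Tset Pr (WFMStage Pr o) ≠ ∅}.Finite := by
  classical
  obtain ⟨L, hL⟩ := hbts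
  -- collect all terms appearing in clause heads
  set T0 : Set (FOTerm F) := ⋃ C ∈ Pr, {t | t ∈ C.head.args} with hT0def
  have hT0 : T0.Finite := hfin.biUnion (fun C _ => C.head.args.finite_toSet)
  obtain ⟨M0, hM0⟩ := (hT0.image SizeOf.sizeOf).bddAbove
  have hM0' : ∀ t ∈ T0, sizeOf t ≤ M0 := fun t ht => hM0 ⟨t, ht, rfl⟩
  obtain ⟨K, hK⟩ := (hfin.image (fun C => C.head.args.length)).bddAbove
  have hK' : ∀ C ∈ Pr, C.head.args.length ≤ K := fun C hC => hK ⟨C, hC, rfl⟩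
  set M : ℕ := M0 * (L + 1) with hMdef
  set S : Set (FOAtom F P) :=
    {A : FOAtom F P | A.args.length ≤ K ∧ ∀ t ∈ A.args, sizeOf t ≤ M} with hSdef
  have hSfin : S.Finite := finite_atoms_le K M
  -- Key invariant: every true atom at any stage lies in the finite set `S`.
  have key : ∀ o : Ordinal.{0}, (WFMStage Pr o).tr ⊆ S := by
    intro o
    induction o using Ordinal.induction with
    | h o ih =>
      intro A hA
      rw [mem_tr_iff] at hA
      obtain ⟨o', ho', hA⟩ := hA
      rcases hA with hA | hA
      · exact ih o' ho' hA
      · obtain ⟨hnot, Cg, hCg, hhead, hbody⟩ := tset_subset_trueOp Pr _ hA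
        obtain ⟨C, hC, hg, hcase⟩ := hCg
        rcases hcase with rfl | ⟨θ, rfl⟩
        · subst hhead
          refine ⟨hK' Cg hC, fun t ht => ?_⟩
          have h1 : t ∈ T0 := Set.mem_biUnion hC ht
          have h2 := hM0' t h1
          have : M0 ≤ M := by rw [hMdef]; nlinarith
          omega
        · have hused : UsedInstance Pr (WFMStage Pr o') (Tset Pr (WFMStage Pr o'))
              (C.subst θ) := by
            refine ⟨⟨C, hC, hg, Or.inr ⟨θ, rfl⟩⟩, hg, ?_, hbody⟩
            rw [hhead]; exact hnot
          have hθ := hL o' (Tset Pr (WFMStage Pr o')) subset_rfl C hC θ hused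
          subst hhead
          constructor
          · show ((C.subst θ).head).args.length ≤ K
            simp only [Clause.subst, FOAtom.subst, List.length_map]
            exact hK' C hC
          · intro t ht
            simp only [Clause.subst, FOAtom.subst, List.mem_map] at ht
            obtain ⟨t0, ht0, rfl⟩ := ht
            have h1 : sizeOf (t0.subst θ) ≤ sizeOf t0 * (L+1) := by
              refine sizeOf_subst_le (by omega) θ t0 (fun n hv => ?_)
              have hvC : C.HasVar n := Or.inl ⟨t0, ht0, hv⟩
              have := hθ n hvC
              simp only [FOTerm.size] at this
              omega
            have h2 : sizeOf t0 ≤ M0 := hM0' t0 (Set.mem_biUnion hC ht0)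
            rw [hMdef]
            nlinarith
  have hWFMsub : (WFM Pr).tr ⊆ S := by
    rintro A ⟨o, hA⟩
    exact key o hA
  have hWFMfin : (WFM Pr).tr.Finite := hSfin.subset hWFMsub
  -- stabilization at a finite stage
  have htrfin : ∀ n : ℕ, ((WFMStage Pr (n : Ordinal.{0})).tr).Finite :=
    fun n => hSfin.subset (key n)
  have hbd : ∀ n : ℕ, ((WFMStage Pr (n : Ordinal.{0})).tr).ncard ≤ S.ncard :=
    fun n => Set.ncard_le_ncard (key n) hSfin
  set f : ℕ → ℕ := fun n => ((WFMStage Pr (n : Ordinal.{0})).tr).ncard with hfdef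
  have hrangefin : (Set.range f).Finite :=
    (Set.finite_Iic S.ncard).subset (by rintro x ⟨n, rfl⟩; exact hbd n)
  obtain ⟨b, ⟨N, hNb⟩, hmax⟩ :=
    Set.exists_max_image (Set.range f) id hrangefin ⟨f 0, Set.mem_range_self 0⟩
  have hN : ∀ n : ℕ, f n ≤ f N := by
    intro n
    have := hmax (f n) (Set.mem_range_self n)
    simpa [hNb] using this
  have htr_stab : ∀ n : ℕ, N ≤ n →
      (WFMStage Pr (n : Ordinal.{0})).tr = (WFMStage Pr (N : Ordinal.{0})).tr := by
    intro n hn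
    have hsub : (WFMStage Pr (N : Ordinal.{0})).tr ⊆ (WFMStage Pr (n : Ordinal.{0})).tr :=
      tr_mono Pr (by exact_mod_cast hn)
    exact (Set.eq_of_subset_of_ncard_le hsub (hN n) (htrfin n)).symm
  have htset_empty : ∀ n : ℕ, N ≤ n → Tset Pr (WFMStage Pr (n : Ordinal.{0})) = ∅ := by
    intro n hn
    ext A
    simp only [Set.mem_empty_iff_false, iff_false]
    intro hA
    have h1 : A ∈ (WFMStage Pr ((n : Ordinal.{0}) + 1)).tr :=
      tset_subset_tr (lt_add_one_ord _) hA
    have hcast : ((n : Ordinal.{0}) + 1) = ((n + 1 : ℕ) : Ordinal.{0}) := by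
      exact (Nat.cast_succ n).symm
    rw [hcast, htr_stab (n+1) (by omega), ← htr_stab n hn] at h1
    exact tset_not_mem_tr hA h1
  have hcastN : ((N + 1 : ℕ) : Ordinal.{0}) = (N : Ordinal.{0}) + 1 := by exact Nat.cast_succ N
  have hfset : Fset Pr (WFMStage Pr ((N + 1 : ℕ) : Ordinal.{0})) = ∅ := by
    have hstep := stage_succ Pr (N : Ordinal.{0})
    rw [htset_empty N le_rfl, Set.union_empty] at hstep
    rw [hcastN, hstep]
    exact fset_step_empty Pr (WFMStage Pr (N : Ordinal.{0}))
  have htsetS : Tset Pr (WFMStage Pr ((N + 1 : ℕ) : Ordinal.{0})) = ∅ :=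
    htset_empty (N+1) (by omega)
  have hstab := stage_stable Pr ((N + 1 : ℕ) : Ordinal.{0}) htsetS hfset
  refine ⟨?_, hWFMfin, ?_⟩
  · rintro A ⟨o, hA⟩
    have hA' : A ∈ (WFMStage Pr ((N + 1 : ℕ) : Ordinal.{0})).tr := by
      rcases le_or_gt o ((N + 1 : ℕ) : Ordinal.{0}) with h | h
      · exact tr_mono Pr h hA
      · rwa [hstab o h.le] at hA
    refine ⟨⟨N + 1, hA'⟩, ?_⟩
    have aux : ∀ m : ℕ, ∀ A : FOAtom F P, A ∈ (WFMStage Pr (m : Ordinal.{0})).tr →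
        ∃ n k : ℕ, A ∈ TrueIter Pr (WFMStage Pr (n : Ordinal.{0})) k := by
      intro m
      induction m with
      | zero =>
        intro A hA
        rw [mem_tr_iff] at hA
        obtain ⟨o', ho', -⟩ := hA
        simp only [Nat.cast_zero] at ho'
        exact absurd ho' (by simp)
      | succ m ihm =>
        intro A hA
        have hcast : ((m + 1 : ℕ) : Ordinal.{0}) = (m : Ordinal.{0}) + 1 := by
          exact Nat.cast_succ m
        rw [hcast, tr_succ] at hA
        rcases hA with hA | hA
        · exact ihm A hA
        · obtain ⟨k, hk⟩ := Set.mem_iUnion.1 (tset_subset_iUnion_trueIter Pr _ hA)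
          exact ⟨m, k, hk⟩
    exact aux (N+1) A hA'
  · have hsub3 : {o : Ordinal.{0} | Tset Pr (WFMStage Pr o) ≠ ∅} ⊆
        (fun n : ℕ => (n : Ordinal.{0})) '' (Set.Iio (N + 1)) := by
      intro o ho
      by_contra hmem
      apply ho
      rcases le_or_gt ((N + 1 : ℕ) : Ordinal.{0}) o with h | h
      · rw [hstab o h]; exact htsetS
      · obtain ⟨m, rfl⟩ := Ordinal.lt_omega0.1 (h.trans (Ordinal.nat_lt_omega0 _))
        exact absurd ⟨m, by exact_mod_cast h, rfl⟩ hmem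
    exact ((Set.finite_Iio (N + 1)).image _).subset hsub3


end DistSem
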